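/- arXiv:2006.02124 — 2 statements merged into one kernel-verified Lean document; each statement's English description precedes it below -/
import Mathlib

section
/- Let G be a graph, H a graph with root vertex v ∈ V(H), and let f be a γ_I(G∘_v H)-function. If B_f = {x ∈ V(G) : ω(f_x) = γ_I(H) − 1} is nonempty, then γ_I(H − {v}) = γ_I(H) − 1. -/
open Finset

open scoped Classical

/-- An Italian dominating function on a finite simple graph: values in {0,1,2} and
every vertex with value 0 has neighbour values summing to at least 2. -/
noncomputable def IsIDF {α : Type*} [Fintype α] (G : SimpleGraph α) (f : α → ℕ) : Prop :=
  (∀ u, f u ≤ 2) ∧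
    ∀ u, f u = 0 → 2 ≤ ∑ w ∈ Finset.univ.filter (fun w => G.Adj u w), f w

/-- The Italian domination number γ_I(G). -/
noncomputable def italianNumber {α : Type*} [Fintype α] (G : SimpleGraph α) : ℕ :=
  sInf {n | ∃ f : α → ℕ, IsIDF G f ∧ ∑ u, f u = n}

/-- A γ_I(G)-function: an IDF on G of minimum weight. -/
noncomputable def IsMinIDF {α : Type*} [Fintype α] (G : SimpleGraph α) (f : α → ℕ) : Prop :=
  IsIDF G f ∧ ∑ u, f u = italianNumber G

/-- D is a dominating set of G. -/
def IsDomSet {α : Type*} (G : SimpleGraph α) (D : Set α) : Prop :=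
  ∀ u ∉ D, ∃ w ∈ D, G.Adj u w

/-- The domination number γ(G). -/
noncomputable def dominationNumber {α : Type*} [Fintype α] (G : SimpleGraph α) : ℕ :=
  sInf {n | ∃ D : Finset α, IsDomSet G ↑D ∧ D.card = n}

/-- The degree of a vertex. -/
noncomputable def deg {α : Type*} [Fintype α] (G : SimpleGraph α) (u : α) : ℕ :=
  (Finset.univ.filter (fun w => G.Adj u w)).card

/-- The rooted product G∘_v H: one copy of H for each vertex of G, the root v of the
x-th copy being identified with the vertex x of G. The pair (x, y) is the vertex y of
the x-th copy of H; in particular (x, v) is the vertex x of G. -/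
def rootedProd {α β : Type*} (G : SimpleGraph α) (H : SimpleGraph β) (v : β) :
    SimpleGraph (α × β) where
  Adj p q := (p.1 = q.1 ∧ H.Adj p.2 q.2) ∨ (p.2 = v ∧ q.2 = v ∧ G.Adj p.1 q.1)
  symm := by
    constructor
    rintro ⟨x, y⟩ ⟨x', y'⟩ (⟨h1, h2⟩ | ⟨h1, h2, h3⟩)
    · exact Or.inl ⟨h1.symm, h2.symm⟩
    · exact Or.inr ⟨h2, h1, h3.symm⟩
  loopless := by
    constructor
    rintro ⟨x, y⟩ (⟨_, h⟩ | ⟨_, _, h⟩)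
    · exact H.loopless.irrefl _ h
    · exact G.loopless.irrefl _ h

/-- The weight ω(f_x) of the restriction of f to the copy H_x. -/
def copyWeight {α β : Type*} [Fintype β] (f : α × β → ℕ) (x : α) : ℕ :=
  ∑ y, f (x, y)

/-- The graph H − {v} obtained from H by deleting the vertex v. -/
def deleteVertex {β : Type*} (H : SimpleGraph β) (v : β) : SimpleGraph {w : β // w ≠ v} :=
  SimpleGraph.induce {w : β | w ≠ v} H

lemma idf_const2 {α : Type*} [Fintype α] (G : SimpleGraph α) : IsIDF G (fun _ => 2) :=
  ⟨fun _ => le_refl 2, fun _ h => by simp at h⟩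

lemma exists_minIDF {α : Type*} [Fintype α] (G : SimpleGraph α) :
    ∃ f : α → ℕ, IsIDF G f ∧ ∑ u, f u = italianNumber G := by
  have hne : {n | ∃ f : α → ℕ, IsIDF G f ∧ ∑ u, f u = n}.Nonempty :=
    ⟨_, fun _ => 2, idf_const2 G, rfl⟩
  obtain ⟨g, hg, hsum⟩ := Nat.sInf_mem hne
  exact ⟨g, hg, hsum⟩

lemma italian_le_of_IDF {α : Type*} [Fintype α] {G : SimpleGraph α} {f : α → ℕ}
    (h : IsIDF G f) : italianNumber G ≤ ∑ u, f u :=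
  Nat.sInf_le ⟨f, h, rfl⟩

lemma one_le_italian {α : Type*} [Fintype α] [Nonempty α] (G : SimpleGraph α) :
    1 ≤ italianNumber G := by
  obtain ⟨f, hf, hsum⟩ := exists_minIDF G
  rcases Nat.eq_zero_or_pos (italianNumber G) with h0 | h1
  · exfalso
    rw [h0] at hsum
    have hz : ∀ u, f u = 0 := fun u =>
      Finset.sum_eq_zero_iff.mp hsum u (Finset.mem_univ u)
    obtain ⟨u⟩ := ‹Nonempty α›
    have h2 := hf.2 u (hz u)
    rw [Finset.sum_eq_zero (fun w _ => hz w)] at h2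
    omega
  · exact h1

lemma sum_subtype_filter {β : Type*} [Fintype β] (v : β) (P : β → Prop) (F : β → ℕ) :
    ∑ w ∈ Finset.univ.filter (fun w : {w : β // w ≠ v} => P w.1), F w.1
      = ∑ b ∈ Finset.univ.filter (fun b => b ≠ v ∧ P b), F b := by
  classical
  rw [Finset.sum_filter]
  rw [← Finset.sum_subtype (Finset.univ.filter (fun b : β => b ≠ v))
        (by simp) (fun b => if P b then F b else 0)]
  rw [Finset.sum_filter, Finset.sum_filter]
  apply Finset.sum_congr rfl
  intro b _
  by_cases hb : b ≠ v <;> by_cases hp : P b <;> simp [hb, hp]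

lemma prod_nbr_sum {α β : Type*} [Fintype α] [Fintype β]
    (G : SimpleGraph α) (H : SimpleGraph β) (v : β) (f : α × β → ℕ)
    (x : α) (u : β) (hu : u ≠ v) :
    ∑ p ∈ Finset.univ.filter (fun p => (rootedProd G H v).Adj (x, u) p), f p
      = ∑ b ∈ Finset.univ.filter (fun b => H.Adj u b), f (x, b) := by
  classical
  have hset : Finset.univ.filter (fun p : α × β => (rootedProd G H v).Adj (x, u) p)
      = ({x} : Finset α) ×ˢ (Finset.univ.filter (fun b => H.Adj u b)) := by
    ext ⟨a, b⟩
    simp only [Finset.mem_filter, Finset.mem_univ, true_and, Finset.mem_product,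
      Finset.mem_singleton]
    constructor
    · rintro (⟨h1, h2⟩ | ⟨h1, _, _⟩)
      · exact ⟨h1.symm, h2⟩
      · exact absurd h1 hu
    · rintro ⟨h1, h2⟩
      exact Or.inl ⟨h1.symm, h2⟩
  rw [hset, Finset.sum_product, Finset.sum_singleton]

/-- Lemma 7: if f is a γ_I(G∘_v H)-function with B_f ≠ ∅, then
γ_I(H − {v}) = γ_I(H) − 1. -/
theorem stmt11 {α β : Type*} [Fintype α] [Nonempty α] [Fintype β]
    (G : SimpleGraph α) (H : SimpleGraph β) (v : β)
    (f : α × β → ℕ) (hf : IsMinIDF (rootedProd G H v) f)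
    (hB : ∃ x : α, copyWeight f x = italianNumber H - 1) :
    italianNumber (deleteVertex H v) = italianNumber H - 1 := by
  classical
  obtain ⟨x, hx⟩ := hB
  obtain ⟨⟨hle, hdom⟩, -⟩ := hf
  have hne : Nonempty β := ⟨v⟩
  have h1 : 1 ≤ italianNumber H := one_le_italian H
  -- f_x is not an IDF on H (its weight is too small)
  have hfx_not : ¬ IsIDF H (fun b => f (x, b)) := by
    intro hidf
    have h2 := italian_le_of_IDF hidf
    have hw : ∑ b, f (x, b) = copyWeight f x := rfl
    rw [hw, hx] at h2
    omega
  have hcond1 : ∀ b, f (x, b) ≤ 2 := fun b => hle (x, b)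
  have hex : ∃ u, f (x, u) = 0 ∧
      ∑ w ∈ Finset.univ.filter (fun w => H.Adj u w), f (x, w) < 2 := by
    by_contra hc
    push_neg at hc
    exact hfx_not ⟨hcond1, fun u h0 => hc u h0⟩
  obtain ⟨u, hu0, husum⟩ := hex
  have huv : u = v := by
    by_contra hne
    have h2 := hdom (x, u) hu0
    rw [prod_nbr_sum G H v f x u hne] at h2
    omega
  subst huv
  -- so f (x, u) = 0 at the root; define g on H - v
  set g : {w : β // w ≠ u} → ℕ := fun w => f (x, w.1) with hg
  have hgidf : IsIDF (deleteVertex H u) g := by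
    constructor
    · intro w; exact hle (x, w.1)
    · intro w hw0
      have hprod := hdom (x, w.1) hw0
      rw [prod_nbr_sum G H u f x w.1 w.2] at hprod
      have hsub : ∑ b ∈ Finset.univ.filter (fun b => b ≠ u ∧ H.Adj w.1 b), f (x, b)
          = ∑ b ∈ Finset.univ.filter (fun b => H.Adj w.1 b), f (x, b) := by
        apply Finset.sum_subset
        · intro b hb
          simp only [Finset.mem_filter, Finset.mem_univ, true_and] at hb ⊢
          exact hb.2
        · intro b hb hnb
          simp only [Finset.mem_filter, Finset.mem_univ, true_and] at hb hnb
          have : b = u := by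
            by_contra hbu
            exact hnb ⟨hbu, hb⟩
          rw [this]; exact hu0
      have hkey : ∑ w' ∈ Finset.univ.filter
            (fun w' : {w : β // w ≠ u} => (deleteVertex H u).Adj w w'), g w'
          = ∑ b ∈ Finset.univ.filter (fun b => b ≠ u ∧ H.Adj w.1 b), f (x, b) :=
        sum_subtype_filter u (fun b => H.Adj w.1 b) (fun b => f (x, b))
      rw [hkey, hsub]
      exact hprod
  have hgw : ∑ w, g w = copyWeight f x := by
    simp only [hg]
    have h2 := sum_subtype_filter u (fun _ => True) (fun b => f (x, b))
    simp only [Finset.filter_true, and_true] at h2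
    have h3 := Finset.sum_filter_add_sum_filter_not Finset.univ
      (fun b : β => b ≠ u) (fun b => f (x, b))
    have h4 : ∑ b ∈ Finset.univ.filter (fun b : β => ¬ b ≠ u), f (x, b) = 0 := by
      apply Finset.sum_eq_zero
      intro b hb
      simp only [Finset.mem_filter, Finset.mem_univ, true_and, not_not] at hb
      rw [hb]; exact hu0
    have hw : copyWeight f x = ∑ b, f (x, b) := rfl
    omega
  have hle1 : italianNumber (deleteVertex H u) ≤ italianNumber H - 1 := by
    have h2 := italian_le_of_IDF hgidf
    rw [hgw, hx] at h2
    exact h2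
  -- reverse inequality
  obtain ⟨g0, hg0, hg0w⟩ := exists_minIDF (deleteVertex H u)
  set h : β → ℕ := fun b => if hb : b = u then 1 else g0 ⟨b, hb⟩ with hh
  have hhu : h u = 1 := dif_pos rfl
  have hhb : ∀ (b : β) (hb : b ≠ u), h b = g0 ⟨b, hb⟩ := fun b hb => dif_neg hb
  have hhidf : IsIDF H h := by
    constructor
    · intro b
      by_cases hb : b = u
      · rw [hb, hhu]; omega
      · rw [hhb b hb]; exact hg0.1 _
    · intro b hb0
      have hbu : b ≠ u := by
        intro hbu; rw [hbu, hhu] at hb0; omega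
      rw [hhb b hbu] at hb0
      have h2 := hg0.2 ⟨b, hbu⟩ hb0
      have hkey : ∑ w' ∈ Finset.univ.filter
            (fun w' : {w : β // w ≠ u} => (deleteVertex H u).Adj ⟨b, hbu⟩ w'), g0 w'
          = ∑ b' ∈ Finset.univ.filter (fun b' => b' ≠ u ∧ H.Adj b b'), h b' := by
        have h3 := sum_subtype_filter u (fun b' => H.Adj b b') h
        rw [← h3]
        apply Finset.sum_congr rfl
        intro w' _
        rw [hhb w'.1 w'.2]
      rw [hkey] at h2
      calc (2 : ℕ) ≤ ∑ b' ∈ Finset.univ.filter (fun b' => b' ≠ u ∧ H.Adj b b'), h b' := h2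
        _ ≤ ∑ b' ∈ Finset.univ.filter (fun b' => H.Adj b b'), h b' := by
            apply Finset.sum_le_sum_of_subset
            intro b' hb'
            simp only [Finset.mem_filter, Finset.mem_univ, true_and] at hb' ⊢
            exact hb'.2
  have hhw : ∑ b, h b = (∑ w, g0 w) + 1 := by
    have h3 := Finset.sum_filter_add_sum_filter_not Finset.univ (fun b : β => b ≠ u) h
    have h4 : ∑ b ∈ Finset.univ.filter (fun b : β => ¬ b ≠ u), h b = 1 := by
      have : Finset.univ.filter (fun b : β => ¬ b ≠ u) = {u} := by
        ext b; simp
      rw [this, Finset.sum_singleton, hhu]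
    have h5 : ∑ b ∈ Finset.univ.filter (fun b : β => b ≠ u), h b = ∑ w, g0 w := by
      have h6 := sum_subtype_filter u (fun _ => True) h
      simp only [Finset.filter_true, and_true] at h6
      rw [← h6]
      apply Finset.sum_congr rfl
      intro w' _
      rw [hhb w'.1 w'.2]
    omega
  have h7 := italian_le_of_IDF hhidf
  rw [hhw, hg0w] at h7
  omega
end

section
/- Let G be a graph of maximum degree at least 2 with γ_I(G) > γ(G), let H be a graph and v ∈ V(H). Then γ_I(G∘_v H) = n(G)·(γ_I(H) − 1) + γ(G) if and only if γ_I(H − {v}) = γ_I(H) − 1 and at least one of the following holds: (i) there exists a γ_I(H − {v})-function g with g(y) > 0 for some neighbour y of v in H; (ii) there exists a γ_I(H)-function h with h(v) = 2. -/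
open Finset

open scoped Classical

-- ### basics

section Basics
variable {α : Type*} [Fintype α] (G : SimpleGraph α)

lemma isIDF_iff (f : α → ℕ) : IsIDF G f ↔ (∀ u, f u ≤ 2) ∧
    ∀ u, f u = 0 → 2 ≤ ∑ w, if G.Adj u w then f w else 0 := by
  unfold IsIDF
  simp [Finset.sum_filter]

lemma exists_minIDF_s16 : ∃ f : α → ℕ, IsMinIDF G f := by
  have hne : {n | ∃ f : α → ℕ, IsIDF G f ∧ ∑ u, f u = n}.Nonempty := by
    refine ⟨∑ _u : α, 2, fun _ => 2, ⟨fun u => le_refl 2, fun u h => by simp at h⟩, rfl⟩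
  obtain ⟨f, hf, hw⟩ := Nat.sInf_mem hne
  exact ⟨f, hf, hw⟩

lemma italian_le {f : α → ℕ} (hf : IsIDF G f) : italianNumber G ≤ ∑ u, f u :=
  Nat.sInf_le ⟨f, hf, rfl⟩

lemma exists_minDom : ∃ D : Finset α, IsDomSet G ↑D ∧ D.card = dominationNumber G := by
  have hne : {n | ∃ D : Finset α, IsDomSet G ↑D ∧ D.card = n}.Nonempty :=
    ⟨(univ : Finset α).card, univ, fun u hu => absurd (by simp) hu, rfl⟩
  obtain ⟨D, hD, hc⟩ := Nat.sInf_mem hne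
  exact ⟨D, hD, hc⟩

lemma dom_le {D : Finset α} (hD : IsDomSet G ↑D) : dominationNumber G ≤ D.card :=
  Nat.sInf_le ⟨D, hD, rfl⟩

lemma italian_pos [Nonempty α] : 1 ≤ italianNumber G := by
  obtain ⟨f, hf, hw⟩ := exists_minIDF_s16 G
  rw [← hw]
  by_contra h
  push_neg at h
  have hz : ∑ u, f u = 0 := by omega
  have hz' : ∀ u, f u = 0 := by
    intro u
    have := Finset.sum_eq_zero_iff.mp hz u (mem_univ u)
    exact this
  obtain ⟨u⟩ := ‹Nonempty α›
  have h2 : (2:ℕ) ≤ ∑ w ∈ univ.filter (fun w => G.Adj u w), f w := hf.2 u (hz' u)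
  have h0 : ∑ w ∈ univ.filter (fun w => G.Adj u w), f w = 0 :=
    Finset.sum_eq_zero (fun w _ => hz' w)
  omega

end Basics

section Split
variable {β : Type*} [Fintype β] (v : β)

lemma sum_split (F : β → ℕ) : ∑ y, F y = F v + ∑ u : {w : β // w ≠ v}, F ↑u := by
  rw [← Finset.add_sum_erase (univ) F (mem_univ v)]
  congr 1
  exact Finset.sum_subtype (univ.erase v) (by simp) F

omit [Fintype β] in
@[simp] lemma deleteVertex_adj {H : SimpleGraph β} {a b : {w : β // w ≠ v}} :
    (deleteVertex H v).Adj a b ↔ H.Adj ↑a ↑b := Iff.rfl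

end Split

section Rooted
variable {α β : Type*} [Fintype α] [Fintype β]
variable (G : SimpleGraph α) (H : SimpleGraph β) (v : β)

/-- internal neighbour sum at the root of copy x -/
noncomputable def intSum (f : α × β → ℕ) (x : α) : ℕ := ∑ y, if H.Adj v y then f (x, y) else 0
/-- external neighbour sum at the root of copy x -/
noncomputable def extSum (f : α × β → ℕ) (x : α) : ℕ := ∑ x', if G.Adj x x' then f (x', v) else 0

lemma ite_or_add {A B : Prop} [Decidable A] [Decidable B] (h : ¬(A ∧ B)) (t : ℕ) :
    (if A ∨ B then t else 0) = (if A then t else 0) + (if B then t else 0) := by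
  by_cases hA : A <;> by_cases hB : B <;> simp_all

lemma nbrSum_root (f : α × β → ℕ) (x : α) :
    ∑ q ∈ univ.filter (fun q => (rootedProd G H v).Adj (x, v) q), f q
      = intSum H v f x + extSum G v f x := by
  rw [Finset.sum_filter, Fintype.sum_prod_type]
  have key : ∀ x' : α, ∀ y' : β,
      (if (rootedProd G H v).Adj (x, v) (x', y') then f (x', y') else 0)
        = (if x = x' ∧ H.Adj v y' then f (x', y') else 0)
          + (if y' = v ∧ G.Adj x x' then f (x', y') else 0) := by
    intro x' y'
    have : (rootedProd G H v).Adj (x, v) (x', y') ↔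
        ((x = x' ∧ H.Adj v y') ∨ (y' = v ∧ G.Adj x x')) := by
      show ((x = x' ∧ H.Adj v y') ∨ (v = v ∧ y' = v ∧ G.Adj x x')) ↔ _
      simp
    rw [if_congr this rfl rfl]
    refine ite_or_add ?_ _
    rintro ⟨⟨_, h1⟩, ⟨h2, _⟩⟩
    exact H.loopless.irrefl v (h2 ▸ h1)
  calc ∑ x', ∑ y', (if (rootedProd G H v).Adj (x, v) (x', y') then f (x', y') else 0)
      = ∑ x', ((∑ y', if x = x' ∧ H.Adj v y' then f (x', y') else 0)
          + ∑ y', if y' = v ∧ G.Adj x x' then f (x', y') else 0) := by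
        refine Finset.sum_congr rfl (fun x' _ => ?_)
        rw [← Finset.sum_add_distrib]
        exact Finset.sum_congr rfl (fun y' _ => key x' y')
    _ = intSum H v f x + extSum G v f x := by
        rw [Finset.sum_add_distrib]
        congr 1
        · have : ∀ x' : α, (∑ y', if x = x' ∧ H.Adj v y' then f (x', y') else 0)
              = if x = x' then (∑ y', if H.Adj v y' then f (x', y') else 0) else 0 := by
            intro x'
            by_cases h : x = x' <;> simp [h]
          rw [Finset.sum_congr rfl (fun x' _ => this x'), Finset.sum_ite_eq]
          simp [intSum]
        · unfold extSum
          refine Finset.sum_congr rfl (fun x' _ => ?_)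
          by_cases h : G.Adj x x' <;> simp [h]

lemma nbrSum_nonroot (f : α × β → ℕ) (x : α) {y : β} (hy : y ≠ v) :
    ∑ q ∈ univ.filter (fun q => (rootedProd G H v).Adj (x, y) q), f q
      = ∑ y', if H.Adj y y' then f (x, y') else 0 := by
  rw [Finset.sum_filter, Fintype.sum_prod_type]
  have key : ∀ x' : α, ∀ y' : β,
      (if (rootedProd G H v).Adj (x, y) (x', y') then f (x', y') else 0)
        = (if x = x' ∧ H.Adj y y' then f (x', y') else 0) := by
    intro x' y'
    have : (rootedProd G H v).Adj (x, y) (x', y') ↔ (x = x' ∧ H.Adj y y') := by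
      show ((x = x' ∧ H.Adj y y') ∨ (y = v ∧ y' = v ∧ G.Adj x x')) ↔ _
      simp [hy]
    rw [if_congr this rfl rfl]
  calc ∑ x', ∑ y', (if (rootedProd G H v).Adj (x, y) (x', y') then f (x', y') else 0)
      = ∑ x', ∑ y', (if x = x' ∧ H.Adj y y' then f (x', y') else 0) := by
        exact Finset.sum_congr rfl (fun x' _ => Finset.sum_congr rfl (fun y' _ => key x' y'))
    _ = _ := by
        have : ∀ x' : α, (∑ y', if x = x' ∧ H.Adj y y' then f (x', y') else 0)
            = if x = x' then (∑ y', if H.Adj y y' then f (x', y') else 0) else 0 := by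
          intro x'
          by_cases h : x = x' <;> simp [h]
        rw [Finset.sum_congr rfl (fun x' _ => this x'), Finset.sum_ite_eq]
        simp

end Rooted

set_option linter.unusedSectionVars false
section Copy
variable {α β : Type*} [Fintype α] [Fintype β]
variable (G : SimpleGraph α) (H : SimpleGraph β) (v : β)

/-- extending an IDF on H − v by value 1 at v gives an IDF on H -/
lemma italian_le_delete_add_one :
    italianNumber H ≤ italianNumber (deleteVertex H v) + 1 := by
  obtain ⟨g, hg, hw⟩ := exists_minIDF_s16 (deleteVertex H v)
  set g' : β → ℕ := fun w => if h : w = v then 1 else g ⟨w, h⟩ with hg'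
  have hIDF : IsIDF H g' := by
    rw [isIDF_iff]
    constructor
    · intro u
      by_cases h : u = v
      · simp [hg', h]
      · rw [hg'] ; simp only [dif_neg h]
        exact hg.1 _
    · intro y hy0
      have hyv : y ≠ v := by
        intro h
        rw [hg'] at hy0; simp [h] at hy0
      have hgy : g ⟨y, hyv⟩ = 0 := by
        rw [hg'] at hy0; simpa [hyv] using hy0
      have h2 : 2 ≤ ∑ u : {w : β // w ≠ v},
          if H.Adj y ↑u then g u else 0 := by
        have := hg.2 ⟨y, hyv⟩ hgy
        rw [Finset.sum_filter] at this
        exact this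
      rw [sum_split v (fun w => if H.Adj y w then g' w else 0)]
      have : ∑ u : {w : β // w ≠ v}, (if H.Adj y ↑u then g' ↑u else 0)
          = ∑ u : {w : β // w ≠ v}, (if H.Adj y ↑u then g u else 0) := by
        refine Finset.sum_congr rfl (fun u _ => ?_)
        rw [hg']
        simp [u.2]
      omega
  have hwt : ∑ y, g' y = italianNumber (deleteVertex H v) + 1 := by
    rw [sum_split v g']
    have h1 : g' v = 1 := by simp [hg']
    have h2 : ∑ u : {w : β // w ≠ v}, g' ↑u = italianNumber (deleteVertex H v) := by
      rw [← hw]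
      refine Finset.sum_congr rfl (fun u _ => ?_)
      rw [hg']; simp [u.2]
    omega
  calc italianNumber H ≤ ∑ y, g' y := italian_le H hIDF
    _ = _ := hwt

variable {G H v} in
/-- If the root of copy x is positive or internally dominated, the copy carries an IDF of H. -/
lemma copy_isIDF {f : α × β → ℕ} (hf : IsIDF (rootedProd G H v) f) (x : α)
    (hx : 0 < f (x, v) ∨ 2 ≤ intSum H v f x) : IsIDF H (fun y => f (x, y)) := by
  rw [isIDF_iff]
  refine ⟨fun y => hf.1 _, fun y hy0 => ?_⟩
  by_cases hyv : y = v
  · subst hyv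
    rcases hx with h | h
    · omega
    · unfold intSum at h
      exact h
  · have h2 := hf.2 (x, y) hy0
    rw [nbrSum_nonroot G H v f x hyv] at h2
    exact h2

variable {G H v} in
/-- If the root of copy x has value 0, the copy minus root is an IDF of H − v. -/
lemma copy_restrict_isIDF {f : α × β → ℕ} (hf : IsIDF (rootedProd G H v) f) (x : α)
    (hx : f (x, v) = 0) : IsIDF (deleteVertex H v) (fun u => f (x, ↑u)) := by
  rw [isIDF_iff]
  refine ⟨fun u => hf.1 _, fun u hu0 => ?_⟩
  have h2 := hf.2 (x, ↑u) hu0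
  rw [nbrSum_nonroot G H v f x u.2] at h2
  rw [sum_split v (fun y => if H.Adj ↑u y then f (x, y) else 0)] at h2
  have hv0 : (if H.Adj ↑u v then f (x, v) else 0) = 0 := by
    by_cases h : H.Adj ↑u v <;> simp [h, hx]
  have : ∑ u' : {w : β // w ≠ v}, (if (deleteVertex H v).Adj u u' then f (x, ↑u') else 0)
      = ∑ u' : {w : β // w ≠ v}, (if H.Adj ↑u ↑u' then f (x, ↑u') else 0) := rfl
  omega

variable {G H v} in
lemma copyWeight_eq_restrict {f : α × β → ℕ} (x : α) (hx : f (x, v) = 0) :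
    copyWeight f x = ∑ u : {w : β // w ≠ v}, f (x, ↑u) := by
  unfold copyWeight
  rw [sum_split v (fun y => f (x, y)), hx]
  omega

variable {G H v} in
/-- every copy weighs at least γ_I(H) − 1 -/
lemma copyWeight_lb {f : α × β → ℕ} (hf : IsIDF (rootedProd G H v) f) (x : α) :
    italianNumber H - 1 ≤ copyWeight f x := by
  by_cases hx : 0 < f (x, v) ∨ 2 ≤ intSum H v f x
  · have := italian_le H (copy_isIDF hf x hx)
    unfold copyWeight
    omega
  · push_neg at hx
    have hx0 : f (x, v) = 0 := by omega
    have h1 := italian_le (deleteVertex H v) (copy_restrict_isIDF hf x hx0)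
    have h2 := copyWeight_eq_restrict (v := v) x hx0
    have h3 := italian_le_delete_add_one H v
    omega

variable {G H v} in
/-- a copy of weight < γ_I(H) has zero root and internal sum ≤ 1 -/
lemma copy_small {f : α × β → ℕ} (hf : IsIDF (rootedProd G H v) f) (x : α)
    (hx : copyWeight f x < italianNumber H) : f (x, v) = 0 ∧ intSum H v f x ≤ 1 := by
  by_contra hcon
  have hx' : 0 < f (x, v) ∨ 2 ≤ intSum H v f x := by
    rcases Nat.eq_zero_or_pos (f (x, v)) with h | h
    · right
      by_contra h2
      exact hcon ⟨h, by omega⟩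
    · left; exact h
  have := italian_le H (copy_isIDF hf x hx')
  unfold copyWeight at hx
  omega

variable {G H v} in
lemma weight_eq_sum_copy (f : α × β → ℕ) : ∑ q, f q = ∑ x, copyWeight f x :=
  Fintype.sum_prod_type f

end Copy

section Lower
variable {α β : Type*} [Fintype α] [Fintype β]
variable {G : SimpleGraph α} {H : SimpleGraph β} {v : β}

lemma exists_pos_of_sum_pos {ι : Type*} {s : Finset ι} {g : ι → ℕ}
    (h : 0 < ∑ i ∈ s, g i) : ∃ i ∈ s, 0 < g i := by
  by_contra hc
  push_neg at hc
  have : ∑ i ∈ s, g i = 0 := Finset.sum_eq_zero (fun i hi => by have := hc i hi; omega)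
  omega

lemma sum_const_add_ind (D : Finset α) (c : ℕ) :
    ∑ x : α, (c + if x ∈ D then 1 else 0) = Fintype.card α * c + D.card := by
  rw [Finset.sum_add_distrib, Finset.sum_const, card_univ, smul_eq_mul]
  congr 1
  rw [Finset.sum_ite_mem, Finset.univ_inter, Finset.sum_const, smul_eq_mul, mul_one]

/-- the set of copies of weight ≥ γ_I(H) dominates G -/
lemma filter_domset {f : α × β → ℕ} (hf : IsIDF (rootedProd G H v) f) :
    IsDomSet G ↑(univ.filter fun x => italianNumber H ≤ copyWeight f x) := by
  intro x hx
  rw [Finset.mem_coe, Finset.mem_filter] at hx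
  push_neg at hx
  have hsmall := copy_small hf x (hx (mem_univ x))
  have hroot := hf.2 (x, v) hsmall.1
  rw [nbrSum_root G H v f x] at hroot
  have hext : 0 < extSum G v f x := by omega
  obtain ⟨x', _, hx'⟩ := exists_pos_of_sum_pos hext
  have hadj : G.Adj x x' ∧ 0 < f (x', v) := by
    by_cases h : G.Adj x x'
    · exact ⟨h, by simpa [h] using hx'⟩
    · simp [h] at hx'
  refine ⟨x', ?_, hadj.1⟩
  rw [Finset.mem_coe, Finset.mem_filter]
  refine ⟨mem_univ x', ?_⟩
  have := italian_le H (copy_isIDF hf x' (Or.inl hadj.2))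
  exact this

/-- universal lower bound -/
lemma product_lb {f : α × β → ℕ} (hf : IsIDF (rootedProd G H v) f) :
    Fintype.card α * (italianNumber H - 1) + dominationNumber G ≤ ∑ q, f q := by
  have hk : 1 ≤ italianNumber H := by
    have : Nonempty β := ⟨v⟩
    exact italian_pos H
  set k := italianNumber H
  set D := univ.filter fun x => k ≤ copyWeight f x with hD
  have hdom := filter_domset hf
  have hγ : dominationNumber G ≤ D.card := dom_le G hdom
  have hterm : ∀ x : α, (k - 1) + (if x ∈ D then 1 else 0) ≤ copyWeight f x := by
    intro x
    by_cases hx : x ∈ D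
    · rw [if_pos hx]
      rw [hD, Finset.mem_filter] at hx
      omega
    · rw [if_neg hx]
      have := copyWeight_lb hf x
      omega
  calc Fintype.card α * (k - 1) + dominationNumber G
      ≤ Fintype.card α * (k - 1) + D.card := by omega
    _ = ∑ x : α, ((k - 1) + if x ∈ D then 1 else 0) := (sum_const_add_ind D (k-1)).symm
    _ ≤ ∑ x, copyWeight f x := Finset.sum_le_sum (fun x _ => hterm x)
    _ = ∑ q, f q := (weight_eq_sum_copy f).symm

end Lower

section Upper
variable {α β : Type*} [Fintype α] [Fintype β]
variable {G : SimpleGraph α} {H : SimpleGraph β} {v : β}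

lemma g_sum_ge {g : {w : β // w ≠ v} → ℕ} (hg : IsIDF (deleteVertex H v) g)
    {y : β} (hyv : y ≠ v) (h0 : g ⟨y, hyv⟩ = 0) :
    2 ≤ ∑ u : {w : β // w ≠ v}, if H.Adj y ↑u then g u else 0 := by
  have := hg.2 ⟨y, hyv⟩ h0
  rw [Finset.sum_filter] at this
  exact this

/-- Construction for condition (i). -/
lemma construct_i (hDel : italianNumber (deleteVertex H v) = italianNumber H - 1)
    {g : {w : β // w ≠ v} → ℕ} (hg : IsMinIDF (deleteVertex H v) g)
    {y₀ : β} (hadj : H.Adj v y₀) (hy₀ : ∀ hne : y₀ ≠ v, 0 < g ⟨y₀, hne⟩) :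
    ∃ f : α × β → ℕ, IsIDF (rootedProd G H v) f ∧
      ∑ q, f q = Fintype.card α * (italianNumber H - 1) + dominationNumber G := by
  obtain ⟨D, hD, hDcard⟩ := exists_minDom G
  set k := italianNumber H with hk
  refine ⟨fun p => if hh : p.2 = v then (if p.1 ∈ D then 1 else 0) else g ⟨p.2, hh⟩, ?_, ?_⟩
  · set f : α × β → ℕ :=
      fun p => if hh : p.2 = v then (if p.1 ∈ D then 1 else 0) else g ⟨p.2, hh⟩ with hf
    constructor
    · rintro ⟨x, y⟩
      by_cases hyv : y = v
      · simp only [hf, hyv, dif_pos]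
        split <;> omega
      · simp only [hf, dif_neg hyv]
        exact hg.1.1 _
    · rintro ⟨x, y⟩ hp0
      by_cases hyv : y = v
      · subst y
        have hxD : x ∉ D := by
          simp only [hf, dif_pos] at hp0
          by_cases h : x ∈ D
          · rw [if_pos h] at hp0; omega
          · exact h
        rw [nbrSum_root G H v f x]
        have hint : 1 ≤ intSum H v f x := by
          have hne : y₀ ≠ v := (H.ne_of_adj hadj).symm
          have h1 : (if H.Adj v y₀ then f (x, y₀) else 0) ≤ intSum H v f x :=
            Finset.single_le_sum (f := fun y' => if H.Adj v y' then f (x, y') else 0)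
              (fun i _ => Nat.zero_le _) (mem_univ y₀)
          rw [if_pos hadj] at h1
          have h2 : f (x, y₀) = g ⟨y₀, hne⟩ := by simp only [hf, dif_neg hne]
          have := hy₀ hne
          omega
        have hext : 1 ≤ extSum G v f x := by
          obtain ⟨x', hx'D, hadj'⟩ := hD x (by simpa using hxD)
          have hx'D' : x' ∈ D := by simpa using hx'D
          have h1 : (if G.Adj x x' then f (x', v) else 0) ≤ extSum G v f x :=
            Finset.single_le_sum (f := fun x'' => if G.Adj x x'' then f (x'', v) else 0)
              (fun i _ => Nat.zero_le _) (mem_univ x')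
          rw [if_pos hadj'] at h1
          have h2 : f (x', v) = 1 := by simp only [hf, dif_pos, if_pos hx'D']
          omega
        omega
      · have hg0 : g ⟨y, hyv⟩ = 0 := by
          simpa only [hf, dif_neg hyv] using hp0
        rw [nbrSum_nonroot G H v _ x hyv]
        rw [sum_split v (fun y' => if H.Adj y y' then f (x, y') else 0)]
        have h2 := g_sum_ge hg.1 hyv hg0
        have h3 : ∑ u : {w : β // w ≠ v}, (if H.Adj y ↑u then f (x, ↑u) else 0)
            = ∑ u : {w : β // w ≠ v}, (if H.Adj y ↑u then g u else 0) := by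
          refine Finset.sum_congr rfl (fun u _ => ?_)
          simp only [hf, dif_neg u.2]
        omega
  · set f : α × β → ℕ :=
      fun p => if hh : p.2 = v then (if p.1 ∈ D then 1 else 0) else g ⟨p.2, hh⟩ with hf
    rw [weight_eq_sum_copy]
    have hcw : ∀ x : α, copyWeight f x = (k - 1) + (if x ∈ D then 1 else 0) := by
      intro x
      unfold copyWeight
      rw [sum_split v (fun y => f (x, y))]
      have h1 : f (x, v) = (if x ∈ D then 1 else 0) := by simp only [hf, dif_pos]
      have h2 : ∑ u : {w : β // w ≠ v}, f (x, ↑u) = k - 1 := by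
        rw [← hDel, ← hg.2]
        refine Finset.sum_congr rfl (fun u _ => ?_)
        simp only [hf, dif_neg u.2]
      omega
    rw [Finset.sum_congr rfl (fun x _ => hcw x), sum_const_add_ind D (k-1), hDcard]

/-- Construction for condition (ii). -/
lemma construct_ii (hDel : italianNumber (deleteVertex H v) = italianNumber H - 1)
    {h : β → ℕ} (hh : IsMinIDF H h) (hv2 : h v = 2) :
    ∃ f : α × β → ℕ, IsIDF (rootedProd G H v) f ∧
      ∑ q, f q = Fintype.card α * (italianNumber H - 1) + dominationNumber G := by
  obtain ⟨D, hD, hDcard⟩ := exists_minDom G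
  obtain ⟨g, hg⟩ := exists_minIDF_s16 (deleteVertex H v)
  set k := italianNumber H with hk
  have hk1 : 1 ≤ k := by
    have : Nonempty β := ⟨v⟩
    exact italian_pos H
  refine ⟨fun p => if p.1 ∈ D then h p.2 else (if hh : p.2 = v then 0 else g ⟨p.2, hh⟩),
    ?_, ?_⟩ <;>
    set f : α × β → ℕ :=
      fun p => if p.1 ∈ D then h p.2 else (if hh : p.2 = v then 0 else g ⟨p.2, hh⟩) with hf
  · constructor
    · rintro ⟨x, y⟩
      by_cases hxD : x ∈ D
      · simp only [hf, if_pos hxD]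
        exact hh.1.1 _
      · simp only [hf, if_neg hxD]
        by_cases hyv : y = v
        · simp [hyv]
        · simp only [dif_neg hyv]
          exact hg.1.1 _
    · rintro ⟨x, y⟩ hp0
      by_cases hxD : x ∈ D
      · -- h y = 0, so y ≠ v and internal h-sum ≥ 2
        have hy0 : h y = 0 := by simpa only [hf, if_pos hxD] using hp0
        have hyv : y ≠ v := fun hc => by rw [hc, hv2] at hy0; omega
        rw [nbrSum_nonroot G H v _ x hyv]
        have h2 : 2 ≤ ∑ y', if H.Adj y y' then h y' else 0 := by
          have := hh.1.2 y hy0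
          rw [Finset.sum_filter] at this
          exact this
        have h3 : ∑ y', (if H.Adj y y' then f (x, y') else 0)
            = ∑ y', (if H.Adj y y' then h y' else 0) := by
          refine Finset.sum_congr rfl (fun y' _ => ?_)
          simp only [hf, if_pos hxD]
        omega
      · by_cases hyv : y = v
        · subst y
          rw [nbrSum_root G H v f x]
          obtain ⟨x', hx'D, hadj'⟩ := hD x (by simpa using hxD)
          have hx'D' : x' ∈ D := by simpa using hx'D
          have h1 : (if G.Adj x x' then f (x', v) else 0) ≤ extSum G v f x :=
            Finset.single_le_sum (f := fun x'' => if G.Adj x x'' then f (x'', v) else 0)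
              (fun i _ => Nat.zero_le _) (mem_univ x')
          rw [if_pos hadj'] at h1
          have h2 : f (x', v) = 2 := by simp only [hf, if_pos hx'D', dif_pos, hv2]
          omega
        · have hg0 : g ⟨y, hyv⟩ = 0 := by
            simpa only [hf, if_neg hxD, dif_neg hyv] using hp0
          rw [nbrSum_nonroot G H v _ x hyv]
          rw [sum_split v (fun y' => if H.Adj y y' then f (x, y') else 0)]
          have h2 := g_sum_ge hg.1 hyv hg0
          have h3 : ∑ u : {w : β // w ≠ v}, (if H.Adj y ↑u then f (x, ↑u) else 0)
              = ∑ u : {w : β // w ≠ v}, (if H.Adj y ↑u then g u else 0) := by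
            refine Finset.sum_congr rfl (fun u _ => ?_)
            simp only [hf, if_neg hxD, dif_neg u.2]
          omega
  · rw [weight_eq_sum_copy]
    have hcw : ∀ x : α, copyWeight f x = (k - 1) + (if x ∈ D then 1 else 0) := by
      intro x
      unfold copyWeight
      by_cases hxD : x ∈ D
      · rw [if_pos hxD]
        have : ∑ y, f (x, y) = ∑ y, h y :=
          Finset.sum_congr rfl (fun y _ => by simp only [hf, if_pos hxD])
        rw [this, hh.2, ← hk]
        omega
      · rw [if_neg hxD]
        rw [sum_split v (fun y => f (x, y))]
        have h1 : f (x, v) = 0 := by simp only [hf, if_neg hxD, dif_pos]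
        have h2 : ∑ u : {w : β // w ≠ v}, f (x, ↑u) = k - 1 := by
          rw [← hDel, ← hg.2]
          refine Finset.sum_congr rfl (fun u _ => ?_)
          simp only [hf, if_neg hxD, dif_neg u.2]
        omega
    rw [Finset.sum_congr rfl (fun x _ => hcw x), sum_const_add_ind D (k-1), hDcard]

end Upper


/-- Theorem: for G of maximum degree at least 2 with γ_I(G) > γ(G),
γ_I(G∘_v H) = n(G)(γ_I(H)−1)+γ(G) iff γ_I(H−{v}) = γ_I(H)−1 and ((i) some
γ_I(H−{v})-function g has g(y) > 0 for some neighbour y of v in H, or (ii) some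
γ_I(H)-function h has h(v) = 2). -/
theorem stmt16 {α β : Type*} [Fintype α] [Nonempty α] [Fintype β]
    (G : SimpleGraph α) (hG : ∃ u : α, 2 ≤ deg G u)
    (hGI : dominationNumber G < italianNumber G)
    (H : SimpleGraph β) (v : β) :
    italianNumber (rootedProd G H v) =
        Fintype.card α * (italianNumber H - 1) + dominationNumber G ↔
      (italianNumber (deleteVertex H v) = italianNumber H - 1 ∧
        ((∃ g : {w : β // w ≠ v} → ℕ, IsMinIDF (deleteVertex H v) g ∧
            ∃ y : β, ∃ hy : H.Adj v y, 0 < g ⟨y, (H.ne_of_adj hy).symm⟩) ∨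
          (∃ h : β → ℕ, IsMinIDF H h ∧ h v = 2))) := by
  have hk1 : 1 ≤ italianNumber H := by
    have : Nonempty β := ⟨v⟩
    exact italian_pos H
  set k := italianNumber H with hkdef
  set n := Fintype.card α with hndef
  set γ := dominationNumber G with hγdef
  constructor
  · -- forward direction
    intro heq
    obtain ⟨f, hf, hwf⟩ := exists_minIDF_s16 (rootedProd G H v)
    have hsum : ∑ x, copyWeight f x = n * (k - 1) + γ := by
      rw [← weight_eq_sum_copy, hwf, heq]
    set D := univ.filter fun x => k ≤ copyWeight f x with hD
    have hdom := filter_domset hf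
    have hγD : γ ≤ D.card := dom_le G hdom
    have hterm : ∀ x ∈ (univ : Finset α),
        (k - 1) + (if x ∈ D then 1 else 0) ≤ copyWeight f x := by
      intro x _
      by_cases hx : x ∈ D
      · rw [if_pos hx]
        rw [hD, Finset.mem_filter] at hx
        omega
      · rw [if_neg hx]
        have := copyWeight_lb hf x
        omega
    have hsum2 : ∑ x : α, ((k - 1) + if x ∈ D then 1 else 0) = n * (k - 1) + D.card :=
      sum_const_add_ind D (k - 1)
    have hDcard : D.card = γ := by
      have hle := Finset.sum_le_sum hterm
      rw [hsum2, hsum] at hle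
      omega
    have heq2 : ∀ x ∈ (univ : Finset α),
        (k - 1) + (if x ∈ D then 1 else 0) = copyWeight f x := by
      rw [← Finset.sum_eq_sum_iff_of_le hterm, hsum2, hsum, hDcard]
    have hγn : γ < n := by
      obtain ⟨u, hu⟩ := hG
      have hpos : 0 < (univ.filter (fun w => G.Adj u w)).card := by
        unfold deg at hu; omega
      obtain ⟨w, hw⟩ := Finset.card_pos.mp hpos
      rw [Finset.mem_filter] at hw
      have hdom' : IsDomSet G ↑(univ.erase u) := by
        intro x hx
        have hxu : x = u := by
          by_contra hc
          exact hx (by simp [hc])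
        refine ⟨w, ?_, hxu ▸ hw.2⟩
        simp [Finset.mem_coe, Finset.mem_erase]
        exact (G.ne_of_adj hw.2).symm
      have h1 : γ ≤ (univ.erase u).card := dom_le G hdom'
      have h2 : (univ.erase u).card = n - 1 := by
        rw [Finset.card_erase_of_mem (mem_univ u), card_univ]
      have h3 : 1 ≤ n := Fintype.card_pos
      omega
    have hnotall : ∃ x₀ : α, x₀ ∉ D := by
      by_contra hc
      push_neg at hc
      have : (univ : Finset α) ⊆ D := fun x _ => hc x
      have := Finset.card_le_card this
      rw [card_univ] at this
      omega
    obtain ⟨x₀, hx₀⟩ := hnotall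
    have hwx₀ : copyWeight f x₀ = k - 1 := by
      have := heq2 x₀ (mem_univ x₀)
      rw [if_neg hx₀] at this
      omega
    have hsmall₀ := copy_small hf x₀ (by omega)
    have hDel : italianNumber (deleteVertex H v) = k - 1 := by
      have h1 : italianNumber (deleteVertex H v) ≤ k - 1 := by
        have := italian_le (deleteVertex H v) (copy_restrict_isIDF hf x₀ hsmall₀.1)
        rw [← copyWeight_eq_restrict x₀ hsmall₀.1, hwx₀] at this
        exact this
      have h2 := italian_le_delete_add_one H v
      omega
    refine ⟨hDel, ?_⟩
    by_cases hB : ∃ x, x ∉ D ∧ 1 ≤ intSum H v f x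
    · left
      obtain ⟨x, hxD, hint⟩ := hB
      have hwx : copyWeight f x = k - 1 := by
        have := heq2 x (mem_univ x)
        rw [if_neg hxD] at this
        omega
      have hsmall := copy_small hf x (by omega)
      refine ⟨fun u => f (x, ↑u), ⟨copy_restrict_isIDF hf x hsmall.1, ?_⟩, ?_⟩
      · rw [hDel, ← copyWeight_eq_restrict x hsmall.1, hwx]
      · obtain ⟨y, _, hy⟩ := exists_pos_of_sum_pos (by omega : 0 < intSum H v f x)
        have hady : H.Adj v y ∧ 0 < f (x, y) := by
          by_cases h : H.Adj v y
          · exact ⟨h, by simpa [h] using hy⟩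
          · simp [h] at hy
        exact ⟨y, hady.1, hady.2⟩
    · by_cases hC : ∃ x, f (x, v) = 2
      · right
        obtain ⟨x, hx2⟩ := hC
        have hIDF : IsIDF H (fun y => f (x, y)) := copy_isIDF hf x (Or.inl (by omega))
        have hxD : x ∈ D := by
          rw [hD, Finset.mem_filter]
          exact ⟨mem_univ x, italian_le H hIDF⟩
        have hwx : copyWeight f x = k := by
          have := heq2 x (mem_univ x)
          rw [if_pos hxD] at this
          omega
        exact ⟨fun y => f (x, y), ⟨hIDF, hwx⟩, hx2⟩
      · exfalso
        push_neg at hB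
        push_neg at hC
        set μ : α → ℕ := fun x => if x ∈ D then 1 else 0 with hμ
        have hμIDF : IsIDF G μ := by
          rw [isIDF_iff]
          constructor
          · intro x; simp only [hμ]; split <;> omega
          · intro x hx0
            have hxD : x ∉ D := by
              by_contra h
              rw [hμ] at hx0; simp only [if_pos h] at hx0
              omega
            have hwx : copyWeight f x = k - 1 := by
              have := heq2 x (mem_univ x)
              rw [if_neg hxD] at this
              omega
            have hsmall := copy_small hf x (by omega)
            have hint0 : intSum H v f x = 0 := by
              have := hB x hxD
              omega
            have hroot := hf.2 (x, v) hsmall.1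
            rw [nbrSum_root G H v f x] at hroot
            have hext : 2 ≤ extSum G v f x := by omega
            have hle : extSum G v f x ≤ ∑ x', if G.Adj x x' then μ x' else 0 := by
              refine Finset.sum_le_sum (fun x' _ => ?_)
              by_cases hadj : G.Adj x x'
              · rw [if_pos hadj, if_pos hadj]
                rcases Nat.eq_zero_or_pos (f (x', v)) with h0 | hpos
                · omega
                · have hx'D : x' ∈ D := by
                    rw [hD, Finset.mem_filter]
                    exact ⟨mem_univ x',
                      italian_le H (copy_isIDF hf x' (Or.inl hpos))⟩
                  have hμ1 : μ x' = 1 := by rw [hμ]; simp only [if_pos hx'D]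
                  have := hC x'
                  have := hf.1 (x', v)
                  omega
              · rw [if_neg hadj, if_neg hadj]
            omega
        have hμw : ∑ x, μ x = γ := by
          rw [hμ, ← hDcard]
          rw [Finset.sum_ite_mem, Finset.univ_inter, Finset.sum_const, smul_eq_mul, mul_one]
        have := italian_le G hμIDF
        rw [hμw] at this
        omega
  · -- backward direction
    rintro ⟨hDel, hcase⟩
    have hlb : n * (k - 1) + γ ≤ italianNumber (rootedProd G H v) := by
      obtain ⟨f', hf', hw'⟩ := exists_minIDF_s16 (rootedProd G H v)
      rw [← hw']
      exact product_lb hf'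
    rcases hcase with ⟨g, hg, y, hy, hpos⟩ | ⟨h, hh, hv2⟩
    · obtain ⟨f, hf, hwf⟩ := construct_i (G := G) hDel hg hy (fun _ => hpos)
      have := italian_le (rootedProd G H v) hf
      rw [hwf, ← hkdef, ← hndef, ← hγdef] at this
      omega
    · obtain ⟨f, hf, hwf⟩ := construct_ii (G := G) hDel hh hv2
      have := italian_le (rootedProd G H v) hf
      rw [hwf, ← hkdef, ← hndef, ← hγdef] at this
      omega
end
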